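/- Let x_1, ..., x_n be positive real numbers such that their sum equals n and the sum of (x_i - 1)^2 equals α with α ≤ 1. Then the product of the x_i is at most exp(-α/6). -/

import Mathlib

lemma log_le_aux {x : ℝ} (hx : 0 < x) (hx2 : x ≤ 2) :
    Real.log x ≤ (x - 1) - (x - 1) ^ 2 / 6 := by
  set s := Real.sqrt x with hs
  have hs0 : 0 ≤ s := Real.sqrt_nonneg x
  have hs2 : s ^ 2 = x := Real.sq_sqrt hx.le
  have hspos : 0 < s := Real.sqrt_pos.mpr hx
  have hlog : Real.log x = 2 * Real.log s := by
    rw [← hs2, Real.log_pow]; push_cast; ring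
  have h1 : Real.log s ≤ s - 1 := Real.log_le_sub_one_of_pos hspos
  have hx2' : s ^ 2 ≤ 2 := by rw [hs2]; exact hx2
  nlinarith [sq_nonneg (1 - s), sq_nonneg s, mul_nonneg (sq_nonneg (1 - s)) hs0,
    sq_nonneg ((1 - s) * (1 + s))]

theorem product_upper_bound_small_alpha (n : ℕ) (x : Fin n → ℝ) (α : ℝ)
    (hx : ∀ i, 0 < x i) (hsum : ∑ i, x i = n)
    (hα : ∑ i, (x i - 1) ^ 2 = α) (hα1 : α ≤ 1) :
    ∏ i, x i ≤ Real.exp (-α / 6) := by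
  have hxi2 : ∀ i, x i ≤ 2 := by
    intro i
    have h1 : (x i - 1) ^ 2 ≤ α := by
      rw [← hα]
      exact Finset.single_le_sum (f := fun j => (x j - 1) ^ 2) (fun j _ => sq_nonneg _) (Finset.mem_univ i)
    nlinarith [hx i]
  have hprodpos : 0 < ∏ i, x i := Finset.prod_pos (fun i _ => hx i)
  have hlogsum : Real.log (∏ i, x i) = ∑ i, Real.log (x i) :=
    Real.log_prod (fun i _ => (hx i).ne')
  have hsumle : ∑ i, Real.log (x i) ≤ -α / 6 := by
    calc ∑ i, Real.log (x i) ≤ ∑ i, ((x i - 1) - (x i - 1) ^ 2 / 6) :=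
          Finset.sum_le_sum (fun i _ => log_le_aux (hx i) (hxi2 i))
      _ = (∑ i, x i - n) - α / 6 := by
          rw [Finset.sum_sub_distrib, Finset.sum_sub_distrib, ← Finset.sum_div, hα]
          simp
      _ = -α / 6 := by rw [hsum]; ring
  calc ∏ i, x i = Real.exp (Real.log (∏ i, x i)) := (Real.exp_log hprodpos).symm
    _ ≤ Real.exp (-α / 6) := by rw [hlogsum]; exact Real.exp_le_exp.mpr hsumle
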